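/- Let ζ and ζ' be the optimal values of the continuous relaxations (in which every binary constraint z_{ij} ∈ {0,1} is replaced by 0 ≤ z_{ij} ≤ 1) of formulation (SPP-F1) and of formulation (SPP-F2), respectively. Then ζ ≤ ζ'. -/

import Mathlib

open scoped BigOperators ENNReal

attribute [local instance] Classical.propDecidable

/-- The ℓ_p norm on ℝ^d for an extended-real exponent `p` (with `‖x‖_∞ = max_k |x_k|`). -/
noncomputable def lpnorm {d : ℕ} (p : ℝ≥0∞) (x : Fin d → ℝ) : ℝ :=
  if p = ∞ then ⨆ k, |x k| else (∑ k, |x k| ^ p.toReal) ^ (1 / p.toReal)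

/-- Out-neighbours of `i` in the adjacency relation `Adj`. -/
noncomputable def outN {m : ℕ} (Adj : Fin m → Fin m → Prop) (i : Fin m) : Finset (Fin m) :=
  Finset.univ.filter (fun j => Adj i j)

/-- In-neighbours of `i` in the adjacency relation `Adj`. -/
noncomputable def inN {m : ℕ} (Adj : Fin m → Fin m → Prop) (i : Fin m) : Finset (Fin m) :=
  Finset.univ.filter (fun h => Adj h i)


lemma lpnorm_eq_norm {d : ℕ} (p : ℝ≥0∞) [Fact (1 ≤ p)] (x : Fin d → ℝ) :
    lpnorm p x = ‖(WithLp.toLp p x : PiLp p (fun _ : Fin d => ℝ))‖ := by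
  rcases eq_or_ne p ∞ with h | h
  · subst h
    rw [lpnorm, if_pos rfl, PiLp.norm_eq_ciSup]
    simp [Real.norm_eq_abs]
  · have hp0 : 0 < p.toReal :=
      ENNReal.toReal_pos (fun h0 => by have := Fact.out (p := 1 ≤ p); simp [h0] at this) h
    rw [lpnorm, if_neg h, PiLp.norm_eq_sum hp0]
    simp [Real.norm_eq_abs]

lemma lpnorm_nonneg {d : ℕ} (p : ℝ≥0∞) (hp : 1 ≤ p) (x : Fin d → ℝ) : 0 ≤ lpnorm p x := by
  haveI : Fact (1 ≤ p) := ⟨hp⟩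
  rw [lpnorm_eq_norm p]; exact norm_nonneg _

lemma lpnorm_sum_le {d : ℕ} (p : ℝ≥0∞) (hp : 1 ≤ p) {ι : Type*} (s : Finset ι)
    (f : ι → Fin d → ℝ) :
    lpnorm p (∑ i ∈ s, f i) ≤ ∑ i ∈ s, lpnorm p (f i) := by
  haveI : Fact (1 ≤ p) := ⟨hp⟩
  simp only [lpnorm_eq_norm p]
  rw [WithLp.toLp_sum]
  exact norm_sum_le (E := PiLp p (fun _ : Fin d => ℝ)) s (fun i => WithLp.toLp p (f i))

lemma mem_outN {m : ℕ} {Adj : Fin m → Fin m → Prop} {i j : Fin m} :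
    j ∈ outN Adj i ↔ Adj i j := by simp [outN]

lemma mem_inN {m : ℕ} {Adj : Fin m → Fin m → Prop} {i h : Fin m} :
    h ∈ inN Adj i ↔ Adj h i := by simp [inN]

lemma sInf_le_sInf_aux {A B : Set ℝ} (hBA : B ⊆ A) (hA : ∀ r ∈ A, 0 ≤ r)
    (hAB : A.Nonempty → B.Nonempty) : sInf A ≤ sInf B := by
  rcases B.eq_empty_or_nonempty with hB | hB
  · rcases A.eq_empty_or_nonempty with hA' | hA'
    · rw [hA', hB]
    · exact absurd (hAB hA') (by simp [hB])
  · exact csInf_le_csInf ⟨0, fun r hr => hA r hr⟩ hB hBA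

/-- The optimal value of the continuous relaxation of formulation (SPP-F1) is at most
the optimal value of the continuous relaxation of formulation (SPP-F2). -/
theorem stmt_12 {d m : ℕ}
    (P : Fin m → Set (Fin d → ℝ))
    (Ext : Fin m → Finset (Fin d → ℝ))
    (hExt : ∀ i, (Ext i : Set (Fin d → ℝ)) = Set.extremePoints ℝ (P i))
    (hP : ∀ i, P i = convexHull ℝ (Ext i : Set (Fin d → ℝ)))
    (hdisj : ∀ i j, i ≠ j → interior (P i) ∩ interior (P j) = ∅)
    (p : Fin m → ℝ≥0∞) (hp : ∀ i, 1 ≤ p i)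
    (ω : Fin m → ℝ) (hω : ∀ i, 0 < ω i)
    (ExtF : Fin m → Fin m → Finset (Fin d → ℝ))
    (hExtF : ∀ i j, i ≠ j → (ExtF i j : Set (Fin d → ℝ)) = Set.extremePoints ℝ (P i ∩ P j))
    (hFpoly : ∀ i j, i ≠ j → P i ∩ P j = convexHull ℝ (ExtF i j : Set (Fin d → ℝ)))
    (Adj : Fin m → Fin m → Prop)
    (hAdj : ∀ i j, Adj i j ↔ i ≠ j ∧ (P i ∩ P j).Nonempty)
    (s t : Fin m) (hst : s ≠ t)
    (xs xt : Fin d → ℝ) (hxs : xs ∈ P s) (hxt : xt ∈ P t) :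
    sInf {r : ℝ | ∃ (dv : Fin m → ℝ) (z : Fin m → Fin m → ℝ)
        (lam : Fin m → Fin m → (Fin d → ℝ) → ℝ),
        (∀ i, 0 ≤ dv i) ∧
        (∀ i j, Adj i j → 0 ≤ z i j ∧ z i j ≤ 1) ∧
        (∀ i j, Adj i j → ∀ e ∈ ExtF i j, 0 ≤ lam i j e) ∧
        ((∑ j ∈ outN Adj s, z s j) - (∑ h ∈ inN Adj s, z h s) = 1) ∧
        (∀ i, i ≠ s → i ≠ t →
          (∑ j ∈ outN Adj i, z i j) - (∑ h ∈ inN Adj i, z h i) = 0) ∧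
        ((∑ j ∈ outN Adj t, z t j) - (∑ h ∈ inN Adj t, z h t) = -1) ∧
        (∀ i, (∑ h ∈ inN Adj i, z h i) ≤ 1) ∧
        (∀ i, (∑ j ∈ outN Adj i, z i j) ≤ 1) ∧
        (lpnorm (p s) ((∑ j ∈ outN Adj s, ∑ e ∈ ExtF s j, lam s j e • e) - xs) ≤ dv s) ∧
        (∀ i, i ≠ s → i ≠ t →
          lpnorm (p i) ((∑ j ∈ outN Adj i, ∑ e ∈ ExtF i j, lam i j e • e)
            - (∑ h ∈ inN Adj i, ∑ e ∈ ExtF h i, lam h i e • e)) ≤ dv i) ∧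
        (lpnorm (p t) (xt - (∑ h ∈ inN Adj t, ∑ e ∈ ExtF h t, lam h t e • e)) ≤ dv t) ∧
        (∀ i j, Adj i j → (∑ e ∈ ExtF i j, lam i j e) = z i j) ∧
        r = ∑ i, ω i * dv i}
    ≤ sInf {r : ℝ | ∃ (dv : Fin m → ℝ) (z : Fin m → Fin m → ℝ)
        (lam : Fin m → Fin m → (Fin d → ℝ) → ℝ)
        (ρ : Fin m → Fin m → Fin m → ℝ)
        (Φ : Fin m → Fin m → Fin m → (Fin d → ℝ) → ℝ)
        (Ψ : Fin m → Fin m → Fin m → (Fin d → ℝ) → ℝ),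
        (∀ i, 0 ≤ dv i) ∧
        (∀ i j, Adj i j → 0 ≤ z i j ∧ z i j ≤ 1) ∧
        (∀ i j, Adj i j → ∀ e ∈ ExtF i j, 0 ≤ lam i j e) ∧
        (∀ i, i ≠ s → i ≠ t → ∀ h j, Adj h i → Adj i j → 0 ≤ ρ h i j) ∧
        (∀ i, i ≠ s → i ≠ t → ∀ h j, Adj h i → Adj i j →
          ∀ e ∈ ExtF h i, 0 ≤ Φ h i j e) ∧
        (∀ i, i ≠ s → i ≠ t → ∀ h j, Adj h i → Adj i j →
          ∀ e ∈ ExtF i j, 0 ≤ Ψ h i j e) ∧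
        ((∑ j ∈ outN Adj s, z s j) - (∑ h ∈ inN Adj s, z h s) = 1) ∧
        (∀ i, i ≠ s → i ≠ t →
          (∑ j ∈ outN Adj i, z i j) - (∑ h ∈ inN Adj i, z h i) = 0) ∧
        ((∑ j ∈ outN Adj t, z t j) - (∑ h ∈ inN Adj t, z h t) = -1) ∧
        (∀ i, (∑ h ∈ inN Adj i, z h i) ≤ 1) ∧
        (∀ i, (∑ j ∈ outN Adj i, z i j) ≤ 1) ∧
        ((∑ j ∈ outN Adj s,
            lpnorm (p s) ((∑ e ∈ ExtF s j, lam s j e • e) - z s j • xs)) ≤ dv s) ∧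
        (∀ i, i ≠ s → i ≠ t →
          (∑ h ∈ inN Adj i, ∑ j ∈ outN Adj i,
            lpnorm (p i) ((∑ e ∈ ExtF i j, Ψ h i j e • e)
              - (∑ e ∈ ExtF h i, Φ h i j e • e))) ≤ dv i) ∧
        ((∑ h ∈ inN Adj t,
            lpnorm (p t) (z h t • xt - (∑ e ∈ ExtF h t, lam h t e • e))) ≤ dv t) ∧
        (∀ i j, Adj i j → (∑ e ∈ ExtF i j, lam i j e) = z i j) ∧
        (∀ i, i ≠ s → i ≠ t → ∀ h, Adj h i →
          (∑ j ∈ outN Adj i, ρ h i j) = z h i) ∧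
        (∀ i, i ≠ s → i ≠ t → ∀ j, Adj i j →
          (∑ h ∈ inN Adj i, ρ h i j) = z i j) ∧
        (∀ i, i ≠ s → i ≠ t → ∀ h j, Adj h i → Adj i j →
          (∑ e ∈ ExtF h i, Φ h i j e) = ρ h i j) ∧
        (∀ i, i ≠ s → i ≠ t → ∀ h, Adj h i → ∀ e ∈ ExtF h i,
          (∑ j ∈ outN Adj i, Φ h i j e) = lam h i e) ∧
        (∀ i, i ≠ s → i ≠ t → ∀ h j, Adj h i → Adj i j →
          (∑ e ∈ ExtF i j, Ψ h i j e) = ρ h i j) ∧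
        (∀ i, i ≠ s → i ≠ t → ∀ j, Adj i j → ∀ e ∈ ExtF i j,
          (∑ h ∈ inN Adj i, Ψ h i j e) = lam i j e) ∧
        r = ∑ i, ω i * dv i} := by
  
  refine sInf_le_sInf_aux ?_ ?_ ?_
  · -- every F2-feasible value is F1-feasible (same dv, z, lam)
    rintro r ⟨dv, z, lam, ρ, Φ, Ψ, hdv, hz, hlam, hρ, hΦ, hΨ, hfs, hfi, hft, hin, hout,
      hns, hni, hnt, hlz, hρout, hρin, hΦe, hΦj, hΨe, hΨh, hr⟩
    have hins : (0:ℝ) ≤ ∑ h ∈ inN Adj s, z h s :=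
      Finset.sum_nonneg fun h hh => (hz h s (mem_inN.mp hh)).1
    have hzout_s : (∑ j ∈ outN Adj s, z s j) = 1 := by
      have := hout s; linarith
    have hout_t : (0:ℝ) ≤ ∑ j ∈ outN Adj t, z t j :=
      Finset.sum_nonneg fun j hj => (hz t j (mem_outN.mp hj)).1
    have hzin_t : (∑ h ∈ inN Adj t, z h t) = 1 := by
      have := hin t; linarith
    refine ⟨dv, z, lam, hdv, hz, hlam, hfs, hfi, hft, hin, hout, ?_, ?_, ?_, hlz, hr⟩
    · have hvs : (∑ j ∈ outN Adj s, ∑ e ∈ ExtF s j, lam s j e • e) - xs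
          = ∑ j ∈ outN Adj s, ((∑ e ∈ ExtF s j, lam s j e • e) - z s j • xs) := by
        rw [Finset.sum_sub_distrib, ← Finset.sum_smul, hzout_s, one_smul]
      rw [hvs]
      exact le_trans (lpnorm_sum_le _ (hp s) _ _) hns
    · intro i his hit
      have hΨs : ∀ j ∈ outN Adj i, (∑ e ∈ ExtF i j, lam i j e • e)
          = ∑ h ∈ inN Adj i, ∑ e ∈ ExtF i j, Ψ h i j e • e := by
        intro j hj
        calc (∑ e ∈ ExtF i j, lam i j e • e)
            = ∑ e ∈ ExtF i j, ∑ h ∈ inN Adj i, Ψ h i j e • e := by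
              refine Finset.sum_congr rfl fun e he => ?_
              rw [← Finset.sum_smul, hΨh i his hit j (mem_outN.mp hj) e he]
          _ = ∑ h ∈ inN Adj i, ∑ e ∈ ExtF i j, Ψ h i j e • e := Finset.sum_comm
      have hΦs : ∀ h ∈ inN Adj i, (∑ e ∈ ExtF h i, lam h i e • e)
          = ∑ j ∈ outN Adj i, ∑ e ∈ ExtF h i, Φ h i j e • e := by
        intro h hh
        calc (∑ e ∈ ExtF h i, lam h i e • e)
            = ∑ e ∈ ExtF h i, ∑ j ∈ outN Adj i, Φ h i j e • e := by
              refine Finset.sum_congr rfl fun e he => ?_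
              rw [← Finset.sum_smul, hΦj i his hit h (mem_inN.mp hh) e he]
          _ = ∑ j ∈ outN Adj i, ∑ e ∈ ExtF h i, Φ h i j e • e := Finset.sum_comm
      have hvi : (∑ j ∈ outN Adj i, ∑ e ∈ ExtF i j, lam i j e • e)
          - (∑ h ∈ inN Adj i, ∑ e ∈ ExtF h i, lam h i e • e)
          = ∑ h ∈ inN Adj i, ∑ j ∈ outN Adj i,
              ((∑ e ∈ ExtF i j, Ψ h i j e • e) - (∑ e ∈ ExtF h i, Φ h i j e • e)) := by
        calc (∑ j ∈ outN Adj i, ∑ e ∈ ExtF i j, lam i j e • e)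
              - (∑ h ∈ inN Adj i, ∑ e ∈ ExtF h i, lam h i e • e)
            = (∑ j ∈ outN Adj i, ∑ h ∈ inN Adj i, ∑ e ∈ ExtF i j, Ψ h i j e • e)
              - (∑ h ∈ inN Adj i, ∑ j ∈ outN Adj i, ∑ e ∈ ExtF h i, Φ h i j e • e) := by
              rw [Finset.sum_congr rfl hΨs, Finset.sum_congr rfl hΦs]
          _ = (∑ h ∈ inN Adj i, ∑ j ∈ outN Adj i, ∑ e ∈ ExtF i j, Ψ h i j e • e)
              - (∑ h ∈ inN Adj i, ∑ j ∈ outN Adj i, ∑ e ∈ ExtF h i, Φ h i j e • e) :=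
              congrArg₂ Sub.sub Finset.sum_comm rfl
          _ = _ := by
              rw [← Finset.sum_sub_distrib]
              exact Finset.sum_congr rfl fun h _ => (Finset.sum_sub_distrib ..).symm
      rw [hvi]
      refine le_trans (lpnorm_sum_le _ (hp i) _ _) (le_trans ?_ (hni i his hit))
      exact Finset.sum_le_sum fun h _ => lpnorm_sum_le _ (hp i) _ _
    · have hvt : xt - (∑ h ∈ inN Adj t, ∑ e ∈ ExtF h t, lam h t e • e)
          = ∑ h ∈ inN Adj t, (z h t • xt - ∑ e ∈ ExtF h t, lam h t e • e) := by
        rw [Finset.sum_sub_distrib, ← Finset.sum_smul, hzin_t, one_smul]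
      rw [hvt]
      exact le_trans (lpnorm_sum_le _ (hp t) _ _) hnt
  · -- F1 values are nonnegative
    rintro r ⟨dv, z, lam, hdv, -, -, -, -, -, -, -, -, -, -, -, hr⟩
    rw [hr]
    exact Finset.sum_nonneg fun i _ => mul_nonneg (hω i).le (hdv i)
  · -- F1 feasible → F2 feasible
    rintro ⟨r, dv, z, lam, hdv, hz, hlam, hfs, hfi, hft, hin, hout, hns, hni, hnt, hlz, hr⟩
    have hio : ∀ i, i ≠ s → i ≠ t →
        (∑ j ∈ outN Adj i, z i j) = ∑ h ∈ inN Adj i, z h i := by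
      intro i his hit; have := hfi i his hit; linarith
    have hz0in : ∀ i h, Adj h i → (∑ h' ∈ inN Adj i, z h' i) = 0 → z h i = 0 := by
      intro i h hhi h0
      exact (Finset.sum_eq_zero_iff_of_nonneg
        (fun h' hh' => (hz h' i (mem_inN.mp hh')).1)).1 h0 h (mem_inN.mpr hhi)
    have hz0out : ∀ i, i ≠ s → i ≠ t → ∀ j, Adj i j →
        (∑ h' ∈ inN Adj i, z h' i) = 0 → z i j = 0 := by
      intro i his hit j hij h0
      have hos : (∑ j' ∈ outN Adj i, z i j') = 0 := by rw [hio i his hit]; exact h0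
      exact (Finset.sum_eq_zero_iff_of_nonneg
        (fun j' hj' => (hz i j' (mem_outN.mp hj')).1)).1 hos j (mem_outN.mpr hij)
    have hlam0 : ∀ i j, Adj i j → z i j = 0 → ∀ e ∈ ExtF i j, lam i j e = 0 := by
      intro i j hij h0 e he
      have h0' : (∑ e' ∈ ExtF i j, lam i j e') = 0 := by rw [hlz i j hij]; exact h0
      exact (Finset.sum_eq_zero_iff_of_nonneg (fun e' he' => hlam i j hij e' he')).1 h0' e he
    set ρ' : Fin m → Fin m → Fin m → ℝ :=
      fun h i j => z h i * z i j / ∑ h' ∈ inN Adj i, z h' i with hρ'def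
    set Φ' : Fin m → Fin m → Fin m → (Fin d → ℝ) → ℝ :=
      fun h i j e => lam h i e * z i j / ∑ h' ∈ inN Adj i, z h' i with hΦ'def
    set Ψ' : Fin m → Fin m → Fin m → (Fin d → ℝ) → ℝ :=
      fun h i j e => lam i j e * z h i / ∑ h' ∈ inN Adj i, z h' i with hΨ'def
    set dv' : Fin m → ℝ := fun i =>
      if i = s then
        ∑ j ∈ outN Adj s, lpnorm (p s) ((∑ e ∈ ExtF s j, lam s j e • e) - z s j • xs)
      else if i = t then
        ∑ h ∈ inN Adj t, lpnorm (p t) (z h t • xt - ∑ e ∈ ExtF h t, lam h t e • e)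
      else
        ∑ h ∈ inN Adj i, ∑ j ∈ outN Adj i,
          lpnorm (p i) ((∑ e ∈ ExtF i j, Ψ' h i j e • e) - (∑ e ∈ ExtF h i, Φ' h i j e • e))
      with hdv'def
    have hisum_nonneg : ∀ i : Fin m, (0:ℝ) ≤ ∑ h' ∈ inN Adj i, z h' i :=
      fun i => Finset.sum_nonneg fun h' hh' => (hz h' i (mem_inN.mp hh')).1
    refine ⟨∑ i, ω i * dv' i, dv', z, lam, ρ', Φ', Ψ', ?_, hz, hlam, ?_, ?_, ?_, hfs, hfi,
      hft, hin, hout, ?_, ?_, ?_, hlz, ?_, ?_, ?_, ?_, ?_, ?_, rfl⟩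
    · intro i
      rw [hdv'def]
      dsimp only
      split_ifs
      · exact Finset.sum_nonneg fun j _ => lpnorm_nonneg _ (hp s) _
      · exact Finset.sum_nonneg fun h _ => lpnorm_nonneg _ (hp t) _
      · exact Finset.sum_nonneg fun h _ => Finset.sum_nonneg fun j _ =>
          lpnorm_nonneg _ (hp i) _
    · intro i his hit h j hhi hij
      exact div_nonneg (mul_nonneg (hz h i hhi).1 (hz i j hij).1) (hisum_nonneg i)
    · intro i his hit h j hhi hij e he
      exact div_nonneg (mul_nonneg (hlam h i hhi e he) (hz i j hij).1) (hisum_nonneg i)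
    · intro i his hit h j hhi hij e he
      exact div_nonneg (mul_nonneg (hlam i j hij e he) (hz h i hhi).1) (hisum_nonneg i)
    · rw [hdv'def]; simp only [if_pos rfl]; exact le_rfl
    · intro i his hit
      rw [hdv'def]; simp only []; rw [if_neg his, if_neg hit]
    · rw [hdv'def]; simp only []; rw [if_neg (Ne.symm hst)]; simp
    · intro i his hit h hhi
      by_cases h0 : (∑ h' ∈ inN Adj i, z h' i) = 0
      · have hz0 := hz0in i h hhi h0
        simp [hρ'def, hz0]
      · rw [hρ'def]
        dsimp only
        rw [← Finset.sum_div, ← Finset.mul_sum, hio i his hit, mul_div_assoc,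
          div_self h0, mul_one]
    · intro i his hit j hij
      by_cases h0 : (∑ h' ∈ inN Adj i, z h' i) = 0
      · have hz0 := hz0out i his hit j hij h0
        simp [hρ'def, hz0]
      · rw [hρ'def]
        dsimp only
        rw [← Finset.sum_div, ← Finset.sum_mul, mul_comm, mul_div_assoc, div_self h0,
          mul_one]
    · intro i his hit h j hhi hij
      rw [hΦ'def, hρ'def]
      dsimp only
      rw [← Finset.sum_div, ← Finset.sum_mul, hlz h i hhi]
    · intro i his hit h hhi e he
      by_cases h0 : (∑ h' ∈ inN Adj i, z h' i) = 0
      · have hl0 : lam h i e = 0 := hlam0 h i hhi (hz0in i h hhi h0) e he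
        simp [hΦ'def, hl0]
      · rw [hΦ'def]
        dsimp only
        rw [← Finset.sum_div, ← Finset.mul_sum, hio i his hit, mul_div_assoc,
          div_self h0, mul_one]
    · intro i his hit h j hhi hij
      rw [hΨ'def, hρ'def]
      dsimp only
      rw [← Finset.sum_div, ← Finset.sum_mul, hlz i j hij, mul_comm (z i j)]
    · intro i his hit j hij e he
      by_cases h0 : (∑ h' ∈ inN Adj i, z h' i) = 0
      · have hl0 : lam i j e = 0 := hlam0 i j hij (hz0out i his hit j hij h0) e he
        simp [hΨ'def, hl0]
      · rw [hΨ'def]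
        dsimp only
        rw [← Finset.sum_div, ← Finset.mul_sum, mul_div_assoc, div_self h0, mul_one]
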